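/- Let a(s,s') ∈ {1, q} be edge gains on a strongly connected finite directed graph with maximal ratio τ (the error edges, with gain 1, have maximal cycle-density τ), and define W(k,s) = min over all walks of length k starting at s of the product of edge gains, with q > 1. Then q^{k − τk − |S|} < W(k,s) < q^{k − τk + l + |S|} where l is the length of the maximal-ratio cycle, and hence lim_{k→∞} (1/k) log_q W(k,s) = 1 − τ for every s. -/

import Mathlib

/-- `s` is a walk of length `n` in the graph with edge relation `A`. -/
def IsWalk {V : Type*} (A : V → V → Prop) (s : ℕ → V) (n : ℕ) : Prop :=
  ∀ i < n, A (s i) (s (i + 1))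

/-- `s` is a simple cycle of length `l`. -/
def IsCycle {V : Type*} (A : V → V → Prop) (s : ℕ → V) (l : ℕ) : Prop :=
  0 < l ∧ IsWalk A s l ∧ s l = s 0 ∧ Function.Injective (fun i : Fin l => s i.val)

/-- Number of error edges in the first `n` steps of the walk `s`. -/
def errCount {V : Type*} (lab : V → V → Bool) (s : ℕ → V) (n : ℕ) : ℕ :=
  ((Finset.range n).filter (fun i => lab (s i) (s (i + 1)) = true)).card

lemma errCount_le {V : Type*} (lab : V → V → Bool) (s : ℕ → V) (n : ℕ) :
    errCount lab s n ≤ n := by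
  classical
  calc errCount lab s n ≤ (Finset.range n).card := Finset.card_filter_le _ _
  _ = n := Finset.card_range n

lemma errCount_mono {V : Type*} (lab : V → V → Bool) (s : ℕ → V) {a b : ℕ} (h : a ≤ b) :
    errCount lab s a ≤ errCount lab s b := by
  classical
  exact Finset.card_le_card (Finset.filter_subset_filter _
    (Finset.range_subset_range.mpr h))

lemma errCount_congr {V : Type*} (lab : V → V → Bool) {s s' : ℕ → V} {n : ℕ}
    (h : ∀ x ≤ n, s x = s' x) : errCount lab s n = errCount lab s' n := by
  classical
  unfold errCount
  congr 1
  apply Finset.filter_congr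
  intro x hx
  rw [Finset.mem_range] at hx
  rw [h x hx.le, h (x+1) hx]

lemma errCount_shift {V : Type*} (lab : V → V → Bool) (s : ℕ → V) (a b : ℕ) :
    errCount lab s (a + b) = errCount lab s a + errCount lab (fun x => s (a + x)) b := by
  classical
  unfold errCount
  rw [Finset.range_add, Finset.filter_union, Finset.card_union_of_disjoint, Finset.filter_map,
    Finset.card_map]
  · congr 1
  · apply Finset.disjoint_filter_filter
    rw [Finset.disjoint_left]
    intro x hx hx2
    simp only [Finset.mem_range, Finset.mem_map, addLeftEmbedding_apply] at hx hx2
    omega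

lemma splice_lemma {V : Type*} [Fintype V] (A : V → V → Prop) (lab : V → V → Bool)
    (σ : ℕ → V) (k : ℕ) (hw : IsWalk A σ k) (hk : Fintype.card V ≤ k) :
    ∃ d, 0 < d ∧ d ≤ k ∧ ∃ cyc, IsCycle A cyc d ∧
      ∃ σ', IsWalk A σ' (k - d) ∧ σ' 0 = σ 0 ∧ σ' (k - d) = σ k ∧
        errCount lab σ k = errCount lab σ' (k - d) + errCount lab cyc d := by
  classical
  set N := Fintype.card V with hN
  obtain ⟨a, b, hab, hfab⟩ := Fintype.exists_ne_map_eq_of_card_lt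
    (fun x : Fin (N + 1) => σ x) (by simp [hN])
  have hQ : ∃ j, (∃ i, i < j ∧ σ i = σ j) ∧ j ≤ k := by
    rcases lt_or_gt_of_ne hab with h | h
    · exact ⟨b, ⟨a, h, hfab⟩, le_trans (Nat.le_of_lt_succ b.2) hk⟩
    · exact ⟨a, ⟨b, h, hfab.symm⟩, le_trans (Nat.le_of_lt_succ a.2) hk⟩
  obtain ⟨j0, hj0, hj0k⟩ := hQ
  have hex : ∃ j, ∃ i, i < j ∧ σ i = σ j := ⟨j0, hj0⟩
  set j := Nat.find hex with hj
  obtain ⟨i, hij, hsij⟩ := Nat.find_spec hex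
  have hjle : j ≤ j0 := Nat.find_min' hex hj0
  have hjk : j ≤ k := le_trans hjle hj0k
  set d := j - i with hd
  have hd0 : 0 < d := by omega
  have hid : i + d = j := by omega
  refine ⟨d, hd0, by omega, fun x => σ (i + x), ⟨hd0, ?_, ?_, ?_⟩, ?_⟩
  · intro x hx
    exact hw (i + x) (by omega)
  · simp only [hid, Nat.add_zero, hsij.symm]; exact hsij.symm
  · intro x y hxy
    by_contra hne
    have hne' : x.val ≠ y.val := fun h => hne (Fin.ext h)
    simp only at hxy
    rcases Nat.lt_or_ge x.val y.val with h | h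
    · exact absurd ⟨i + x.val, by omega, hxy⟩ (Nat.find_min hex (by omega : i + y.val < j))
    · have h' : y.val < x.val := by omega
      exact absurd ⟨i + y.val, by omega, hxy.symm⟩ (Nat.find_min hex (by omega : i + x.val < j))
  · set σ' : ℕ → V := fun x => if x < i then σ x else σ (x + d) with hσ'
    have hagree : ∀ x ≤ i, σ' x = σ x := by
      intro x hx
      rcases lt_or_eq_of_le hx with h | h
      · simp [hσ', h]
      · subst h
        simp only [hσ', lt_irrefl, if_neg (lt_irrefl x)]
        rw [hid, ← hsij]
    have hge : ∀ x, i ≤ x → σ' x = σ (x + d) := by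
      intro x hx
      simp [hσ', Nat.not_lt.mpr hx]
    refine ⟨σ', ?_, ?_, ?_, ?_⟩
    · intro x hx
      rcases Nat.lt_or_ge x i with h | h
      · rw [hagree x h.le, hagree (x+1) h]
        exact hw x (by omega)
      · rw [hge x h, hge (x+1) (by omega)]
        have hxx : x + 1 + d = x + d + 1 := by omega
        rw [hxx]
        exact hw (x + d) (by omega)
    · exact hagree 0 (Nat.zero_le i)
    · rw [hge (k - d) (by omega)]
      congr 1
      omega
    · have e1 : errCount lab σ k = errCount lab σ j + errCount lab (fun x => σ (j + x)) (k - j) := by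
        rw [← errCount_shift]
        congr 1
        omega
      have e2 : errCount lab σ j = errCount lab σ i + errCount lab (fun x => σ (i + x)) d := by
        rw [← errCount_shift, hid]
      have e3 : errCount lab σ' (k - d) =
          errCount lab σ' i + errCount lab (fun x => σ' (i + x)) (k - j) := by
        rw [← errCount_shift]
        congr 1
        omega
      have e4 : errCount lab σ' i = errCount lab σ i :=
        errCount_congr lab (fun x hx => hagree x hx)
      have e5 : (fun x => σ' (i + x)) = (fun x => σ (j + x)) := by
        funext x
        rw [hge (i + x) (by omega)]
        congr 1
        omega
      rw [e1, e2, e3, e4, e5]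
      ring

lemma err_walk_bound {V : Type*} [Fintype V] [Nonempty V] (A : V → V → Prop)
    (lab : V → V → Bool) (τ : ℝ) (hτ0 : 0 ≤ τ)
    (hub : ∀ (s : ℕ → V) (l' : ℕ), IsCycle A s l' → (errCount lab s l' : ℝ) ≤ τ * l') :
    ∀ (k : ℕ) (σ : ℕ → V), IsWalk A σ k →
      (errCount lab σ k : ℝ) ≤ τ * k + ((Fintype.card V : ℝ) - 1) := by
  intro k
  induction k using Nat.strong_induction_on with
  | _ k ih =>
    intro σ hw
    rcases Nat.lt_or_ge k (Fintype.card V) with h | h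
    · have h1 : (errCount lab σ k : ℝ) ≤ k := by exact_mod_cast errCount_le lab σ k
      have h2 : (k : ℝ) + 1 ≤ Fintype.card V := by exact_mod_cast h
      have h3 : 0 ≤ τ * k := mul_nonneg hτ0 (Nat.cast_nonneg k)
      linarith
    · obtain ⟨d, hd0, hdk, cyc, hcyc, σ', hw', h0, hk', herr⟩ := splice_lemma A lab σ k hw h
      have ih' := ih (k - d) (by omega) σ' hw'
      have hcb := hub cyc d hcyc
      have hcast : ((k - d : ℕ) : ℝ) = (k : ℝ) - d := by
        push_cast [Nat.cast_sub hdk]; ring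
      rw [herr]
      push_cast
      rw [hcast] at ih'
      have : τ * ((k : ℝ) - d) + τ * d = τ * k := by ring
      linarith

lemma short_path {V : Type*} [Fintype V] (A : V → V → Prop) :
    ∀ (m : ℕ) (p : ℕ → V), IsWalk A p m →
      ∃ m' p', m' < Fintype.card V ∧ IsWalk A p' m' ∧ p' 0 = p 0 ∧ p' m' = p m := by
  intro m
  induction m using Nat.strong_induction_on with
  | _ m ih =>
    intro p hw
    rcases Nat.lt_or_ge m (Fintype.card V) with h | h
    · exact ⟨m, p, h, hw, rfl, rfl⟩
    · obtain ⟨d, hd0, hdk, cyc, hcyc, σ', hw', h0, hk', _⟩ :=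
        splice_lemma A (fun _ _ => false) p m hw h
      obtain ⟨m', p', hm', hw'', h0', hend⟩ := ih (m - d) (by omega) σ' hw'
      exact ⟨m', p', hm', hw'', by rw [h0', h0], by rw [hend, hk']⟩

lemma prod_gain {V : Type*} (lab : V → V → Bool) (q : ℝ) (σ : ℕ → V) (k : ℕ) :
    ∏ i ∈ Finset.range k, (if lab (σ i) (σ (i + 1)) then (1 : ℝ) else q)
      = q ^ (k - errCount lab σ k) := by
  classical
  rw [Finset.prod_ite]
  simp only [Finset.prod_const_one, Finset.prod_const, one_mul]
  congr 1
  have h := Finset.card_filter_add_card_filter_not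
    (s := Finset.range k) (p := fun i => lab (σ i) (σ (i+1)) = true)
  unfold errCount
  rw [Finset.card_range] at h
  omega

lemma succ_mod_eq {l : ℕ} (x : ℕ) : (x + 1) % l = (x % l + 1) % l :=
  Nat.ModEq.symm ((Nat.mod_modEq x l).add_right 1)

theorem stmt19 {V : Type*} [Fintype V] [Nonempty V]
    (A : V → V → Prop) (lab : V → V → Bool)
    (q : ℝ) (hq : 1 < q)
    (hsc : ∀ u v : V, ∃ (m : ℕ) (s : ℕ → V), IsWalk A s m ∧ s 0 = u ∧ s m = v)
    (hout : ∀ v : V, ∃ v', A v v')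
    (c : ℕ → V) (l e : ℕ) (hc : IsCycle A c l) (he : errCount lab c l = e)
    (τ : ℝ) (hτ : τ = (e : ℝ) / l)
    (hub : ∀ (s : ℕ → V) (l' : ℕ), IsCycle A s l' → (errCount lab s l' : ℝ) ≤ τ * l')
    (W : ℕ → V → ℝ)
    (hW : ∀ (k : ℕ) (s₀ : V), IsLeast {x : ℝ | ∃ σ : ℕ → V, IsWalk A σ k ∧ σ 0 = s₀ ∧
      x = ∏ i ∈ Finset.range k, (if lab (σ i) (σ (i + 1)) then (1 : ℝ) else q)} (W k s₀)) :
    (∀ (k : ℕ) (s₀ : V),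
      q ^ ((k : ℝ) - τ * k - (Fintype.card V : ℝ)) < W k s₀ ∧
      W k s₀ < q ^ ((k : ℝ) - τ * k + (l : ℝ) + (Fintype.card V : ℝ))) ∧
    ∀ s₀ : V, Filter.Tendsto (fun k : ℕ => Real.logb q (W k s₀) / k)
      Filter.atTop (nhds (1 - τ)) := by
  classical
  set N := Fintype.card V with hN
  have hN1 : 1 ≤ N := Fintype.card_pos
  have hl0 : 0 < l := hc.1
  have hl0' : (0:ℝ) < l := by exact_mod_cast hl0
  have hel : e ≤ l := he ▸ errCount_le lab c l
  have he_l : (e:ℝ) ≤ l := by exact_mod_cast hel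
  have hτ0 : 0 ≤ τ := by rw [hτ]; positivity
  have hτ1 : τ ≤ 1 := by
    rw [hτ, div_le_one hl0']
    exact he_l
  have hq0 : 0 < q := lt_trans one_pos hq
  have hcl : c l = c 0 := hc.2.2.1
  set cper : ℕ → V := fun x => c (x % l) with hcper
  have hstep : ∀ x, A (c (x % l)) (c ((x + 1) % l)) := by
    intro x
    have hr : x % l < l := Nat.mod_lt _ hl0
    rw [succ_mod_eq]
    rcases Nat.lt_or_ge (x % l + 1) l with h | h
    · rw [Nat.mod_eq_of_lt h]
      exact hc.2.1 _ hr
    · have h1 : x % l + 1 = l := by omega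
      rw [h1, Nat.mod_self, ← hcl]
      have h2 := hc.2.1 (x % l) hr
      rwa [h1] at h2
  have hcagree : ∀ x ≤ l, cper x = c x := by
    intro x hx
    rcases lt_or_eq_of_le hx with h | h
    · simp [hcper, Nat.mod_eq_of_lt h]
    · subst h
      simp [hcper, Nat.mod_self, hcl]
  have hcpere : errCount lab cper l = e := by
    rw [← he]
    exact errCount_congr lab hcagree
  have hcper_mul : ∀ n, errCount lab cper (n * l) = n * e := by
    intro n
    induction n with
    | zero => simp [errCount]
    | succ n ihn =>
      have h1 : (n + 1) * l = n * l + l := by ring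
      rw [h1, errCount_shift, ihn]
      have h2 : (fun x => cper (n * l + x)) = cper := by
        funext x
        simp only [hcper]
        congr 1
        rw [Nat.add_comm, Nat.add_mul_mod_self_right]
      rw [h2, hcpere]
      ring
  have key1 : ∀ (k : ℕ) (s₀ : V), q ^ ((k : ℝ) - τ * k - (N : ℝ)) < W k s₀ := by
    intro k s₀
    obtain ⟨σm, hwm, h0m, hWm⟩ := (hW k s₀).1
    rw [hWm, prod_gain]
    have hEk : errCount lab σm k ≤ k := errCount_le lab σm k
    have hEb : (errCount lab σm k : ℝ) ≤ τ * k + ((N : ℝ) - 1) :=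
      err_walk_bound A lab τ hτ0 hub k σm hwm
    rw [← Real.rpow_natCast q (k - errCount lab σm k)]
    apply (Real.rpow_lt_rpow_left_iff hq).mpr
    rw [Nat.cast_sub hEk]
    have : (1:ℝ) ≤ N := by exact_mod_cast hN1
    linarith
  have key2 : ∀ (k : ℕ) (s₀ : V), W k s₀ < q ^ ((k : ℝ) - τ * k + (l : ℝ) + (N : ℝ)) := by
    intro k s₀
    obtain ⟨m0, p0, hwp0, hp00, hp0m⟩ := hsc s₀ (c 0)
    obtain ⟨m, p, hmN, hwp, hp0, hpm⟩ := short_path A m0 p0 hwp0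
    have hpc : p m = c 0 := hpm.trans hp0m
    have hps : p 0 = s₀ := hp0.trans hp00
    set σ : ℕ → V := fun x => if x < m then p x else cper (x - m) with hσdef
    have hσge : ∀ x, m ≤ x → σ x = cper (x - m) := by
      intro x hx
      simp [hσdef, Nat.not_lt.mpr hx]
    have hσlt : ∀ x, x < m → σ x = p x := by
      intro x hx
      simp [hσdef, hx]
    have hσw : IsWalk A σ k := by
      intro x hx
      rcases Nat.lt_or_ge x m with h | h
      · rw [hσlt x h]
        rcases Nat.lt_or_ge (x + 1) m with h2 | h2
        · rw [hσlt _ h2]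
          exact hwp x h
        · have h3 : x + 1 = m := by omega
          rw [hσge _ h2, h3, Nat.sub_self]
          rw [show cper 0 = c 0 by simp [hcper], ← hpc, ← h3]
          exact hwp x h
      · rw [hσge x h, hσge (x + 1) (by omega), show x + 1 - m = (x - m) + 1 by omega]
        exact hstep (x - m)
    have hσ0 : σ 0 = s₀ := by
      rcases Nat.eq_zero_or_pos m with h | h
      · rw [hσge 0 (by omega)]
        have hc0 : c 0 = s₀ := by
          rw [← hps, ← hpc, h]
        rw [show cper (0 - m) = c 0 by simp [hcper], hc0]
      · rw [hσlt 0 h]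
        exact hps
    have hEσ : (τ * k - l - N : ℝ) < errCount lab σ k := by
      rcases Nat.lt_or_ge k m with hkm | hkm
      · have hkN : (k:ℝ) < N := by exact_mod_cast lt_trans hkm hmN
        have hτk : τ * k ≤ k := by nlinarith [Nat.cast_nonneg (α := ℝ) k]
        have hE0 : (0:ℝ) ≤ errCount lab σ k := Nat.cast_nonneg _
        linarith
      · set n := (k - m) / l with hn
        have hdm : n * l ≤ k - m := Nat.div_mul_le_self (k - m) l
        have hup : k - m < n * l + l := by
          have h2 := Nat.div_add_mod (k - m) l
          have h3 := Nat.mod_lt (k - m) hl0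
          calc k - m = l * n + (k - m) % l := h2.symm
          _ < l * n + l := Nat.add_lt_add_left h3 _
          _ = n * l + l := by ring
        have hEge : n * e ≤ errCount lab σ k := by
          have hmk : m + n * l ≤ k := by
            have := Nat.add_le_add_left hdm m
            rwa [Nat.add_sub_cancel' hkm] at this
          have h1 : errCount lab σ (m + n * l) ≤ errCount lab σ k :=
            errCount_mono lab σ hmk
          have h2 := errCount_shift lab σ m (n * l)
          have h3 : (fun x => σ (m + x)) = cper := by
            funext x
            rw [hσge (m + x) (by omega)]
            congr 1
            omega
          rw [h3, hcper_mul n] at h2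
          omega
        have c1 : ((k:ℝ) - m) ≤ (l:ℝ) * n + l := by
          have : ((k - m : ℕ) : ℝ) ≤ ((n * l + l : ℕ) : ℝ) := by exact_mod_cast hup.le
          rw [Nat.cast_sub hkm] at this
          push_cast at this
          linarith
        have t1 : τ * ((k:ℝ) - m) ≤ τ * ((l:ℝ) * n + l) := mul_le_mul_of_nonneg_left c1 hτ0
        have t2 : τ * ((l:ℝ) * n + l) = (e:ℝ) * n + e := by
          rw [hτ]
          field_simp
        have t3 : τ * (m:ℝ) ≤ m := by nlinarith [Nat.cast_nonneg (α := ℝ) m]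
        have t4 : (m:ℝ) < N := by exact_mod_cast hmN
        have hEr : (n:ℝ) * e ≤ errCount lab σ k := by exact_mod_cast hEge
        have expand : τ * ((k:ℝ) - m) = τ * k - τ * m := by ring
        nlinarith
    have hle : W k s₀ ≤ q ^ (k - errCount lab σ k) := by
      have hmem : q ^ (k - errCount lab σ k) ∈ {x : ℝ | ∃ σ' : ℕ → V, IsWalk A σ' k ∧ σ' 0 = s₀ ∧
          x = ∏ i ∈ Finset.range k, (if lab (σ' i) (σ' (i + 1)) then (1 : ℝ) else q)} :=
        ⟨σ, hσw, hσ0, (prod_gain lab q σ k).symm⟩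
      exact (hW k s₀).2 hmem
    refine lt_of_le_of_lt hle ?_
    rw [← Real.rpow_natCast q (k - errCount lab σ k)]
    apply (Real.rpow_lt_rpow_left_iff hq).mpr
    rw [Nat.cast_sub (errCount_le lab σ k)]
    linarith
  refine ⟨fun k s₀ => ⟨key1 k s₀, key2 k s₀⟩, ?_⟩
  intro s₀
  have hWpos : ∀ k, 0 < W k s₀ := fun k =>
    lt_trans (Real.rpow_pos_of_pos hq0 _) (key1 k s₀)
  apply tendsto_of_tendsto_of_tendsto_of_le_of_le'
    (g := fun k : ℕ => ((k:ℝ) - τ * k - N) / k)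
    (h := fun k : ℕ => ((k:ℝ) - τ * k + l + N) / k)
  · have hcg : (fun k : ℕ => ((k:ℝ) - τ * k - N) / k) =ᶠ[Filter.atTop]
        (fun k : ℕ => (1 - τ) - (N:ℝ) / k) := by
      filter_upwards [Filter.eventually_gt_atTop 0] with k hk
      have hk0 : (k:ℝ) ≠ 0 := by positivity
      field_simp
    rw [Filter.tendsto_congr' hcg]
    have h0 := tendsto_const_div_atTop_nhds_zero_nat (N:ℝ)
    have h1 := Filter.Tendsto.const_sub (1 - τ) h0
    simpa using h1
  · have hcg : (fun k : ℕ => ((k:ℝ) - τ * k + l + N) / k) =ᶠ[Filter.atTop]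
        (fun k : ℕ => (1 - τ) + ((l:ℝ) + N) / k) := by
      filter_upwards [Filter.eventually_gt_atTop 0] with k hk
      have hk0 : (k:ℝ) ≠ 0 := by positivity
      field_simp
      ring
    rw [Filter.tendsto_congr' hcg]
    have h0 := tendsto_const_div_atTop_nhds_zero_nat ((l:ℝ) + N)
    have h1 := Filter.Tendsto.const_add (1 - τ) h0
    simpa using h1
  · filter_upwards [Filter.eventually_gt_atTop 0] with k hk
    have hkpos : (0:ℝ) < k := by exact_mod_cast hk
    have hlb : (k:ℝ) - τ * k - N ≤ Real.logb q (W k s₀) := by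
      have h1 := Real.logb_le_logb_of_le hq
        (Real.rpow_pos_of_pos hq0 ((k:ℝ) - τ * k - N)) (le_of_lt (key1 k s₀))
      rwa [Real.logb_rpow hq0 (ne_of_gt hq)] at h1
    exact div_le_div_of_nonneg_right hlb hkpos.le |>.trans_eq rfl
  · filter_upwards [Filter.eventually_gt_atTop 0] with k hk
    have hkpos : (0:ℝ) < k := by exact_mod_cast hk
    have hub' : Real.logb q (W k s₀) ≤ (k:ℝ) - τ * k + l + N := by
      have h1 := Real.logb_le_logb_of_le hq (hWpos k) (le_of_lt (key2 k s₀))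
      rwa [Real.logb_rpow hq0 (ne_of_gt hq)] at h1
    exact div_le_div_of_nonneg_right hub' hkpos.le |>.trans_eq rfl
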